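/- arXiv:1510.05731 — 3 statements merged into one kernel-verified Lean document; each statement's English description precedes it below -/
import Mathlib

section
/- For y ≥ 0 and n a positive integer, the integral I(y,n) = ∫_0^1 e^{y(s-1)} s^n ds satisfies |I(y,n) - 1/(y+n)| ≤ 12/(y+n)^2. -/
open Real intervalIntegral

theorem stmt_6 (y : ℝ) (hy : 0 ≤ y) (n : ℕ) (hn : 0 < n) :
    |(∫ s in (0:ℝ)..1, Real.exp (y * (s - 1)) * s ^ n) - 1 / (y + n)| ≤ 12 / (y + n) ^ 2 := by
  set c : ℝ := y + n with hc
  have hn1 : (1:ℝ) ≤ (n:ℝ) := by exact_mod_cast hn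
  have hc1 : (1:ℝ) ≤ c := by rw [hc]; linarith
  have hc0 : (0:ℝ) < c := by linarith
  have hcont : Continuous fun s : ℝ => Real.exp (y * (s - 1)) * s ^ n := by continuity
  -- upper bound
  have hup : (∫ s in (0:ℝ)..1, Real.exp (y * (s - 1)) * s ^ n) ≤ 1 / c := by
    have h1 : (∫ s in (0:ℝ)..1, Real.exp (y * (s - 1)) * s ^ n)
        ≤ ∫ s in (0:ℝ)..1, Real.exp (c * (s - 1)) := by
      apply intervalIntegral.integral_mono_on (by norm_num)
        (hcont.intervalIntegrable 0 1) ((by continuity : Continuous fun s : ℝ =>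
          Real.exp (c * (s - 1))).intervalIntegrable 0 1)
      intro s hs
      obtain ⟨hs0, hs1⟩ := hs
      have hsn : s ^ n ≤ Real.exp ((n : ℝ) * (s - 1)) := by
        have h2 : s ≤ Real.exp (s - 1) := by
          have := Real.add_one_le_exp (s - 1); linarith
        calc s ^ n ≤ (Real.exp (s - 1)) ^ n := pow_le_pow_left₀ hs0 h2 n
          _ = Real.exp ((n : ℝ) * (s - 1)) := by rw [← Real.exp_nat_mul]
      calc Real.exp (y * (s - 1)) * s ^ n
          ≤ Real.exp (y * (s - 1)) * Real.exp ((n : ℝ) * (s - 1)) :=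
            mul_le_mul_of_nonneg_left hsn (Real.exp_nonneg _)
        _ = Real.exp (c * (s - 1)) := by rw [← Real.exp_add, hc]; ring_nf
    have h2 : (∫ s in (0:ℝ)..1, Real.exp (c * (s - 1)))
        = (1 - Real.exp (-c)) / c := by
      have hd : ∀ s ∈ Set.uIcc (0:ℝ) 1, HasDerivAt (fun t => Real.exp (c * (t - 1)) / c)
          (Real.exp (c * (s - 1))) s := by
        intro s _
        have h3 : HasDerivAt (fun t : ℝ => c * (t - 1)) c s := by
          simpa using ((hasDerivAt_id s).sub_const 1).const_mul c
        have := (h3.exp).div_const c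
        simpa [mul_comm, mul_div_assoc, mul_div_cancel_left₀ _ (ne_of_gt hc0)] using this
      rw [intervalIntegral.integral_eq_sub_of_hasDerivAt hd
        ((by continuity : Continuous fun s : ℝ => Real.exp (c * (s - 1))).intervalIntegrable 0 1)]
      rw [sub_div]
      norm_num
    have h3 : (1 - Real.exp (-c)) / c ≤ 1 / c := by
      have := Real.exp_pos (-c)
      gcongr
      linarith
    linarith
  -- lower bound
  have hlow : 1 / (c + 1) ≤ (∫ s in (0:ℝ)..1, Real.exp (y * (s - 1)) * s ^ n) := by
    have h1 : (∫ s in (0:ℝ)..1, s ^ c)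
        ≤ ∫ s in (0:ℝ)..1, Real.exp (y * (s - 1)) * s ^ n := by
      apply intervalIntegral.integral_mono_on (by norm_num)
        (intervalIntegrable_rpow (Or.inl (le_of_lt hc0)))
        (hcont.intervalIntegrable 0 1)
      intro s hs
      obtain ⟨hs0, hs1⟩ := hs
      rcases eq_or_lt_of_le hs0 with h | h
      · rw [← h, Real.zero_rpow (ne_of_gt hc0)]
        simp [zero_pow hn.ne']
      · have hsy : s ^ y ≤ Real.exp (y * (s - 1)) := by
          rw [Real.rpow_def_of_pos h, mul_comm (Real.log s) y]
          exact Real.exp_le_exp.mpr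
            (mul_le_mul_of_nonneg_left (Real.log_le_sub_one_of_pos h) hy)
        calc s ^ c = s ^ y * s ^ n := by
              rw [hc, Real.rpow_add h, Real.rpow_natCast]
          _ ≤ Real.exp (y * (s - 1)) * s ^ n :=
              mul_le_mul_of_nonneg_right hsy (pow_nonneg (le_of_lt h) n)
    have h2 : (∫ s in (0:ℝ)..1, s ^ c) = 1 / (c + 1) := by
      rw [integral_rpow (Or.inl (by linarith : (-1:ℝ) < c))]
      rw [Real.one_rpow, Real.zero_rpow (by linarith : c + 1 ≠ 0)]
      norm_num
    linarith
  rw [abs_le]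
  constructor
  · have h4 : 1 / c - 1 / (c + 1) ≤ 12 / c ^ 2 := by
      rw [div_sub_div _ _ (ne_of_gt hc0) (by linarith : c + 1 ≠ 0)]
      rw [div_le_div_iff₀ (by positivity) (by positivity)]
      ring_nf
      nlinarith
    linarith
  · have : (0:ℝ) ≤ 12 / c ^ 2 := by positivity
    linarith
end

section
/- For the function F(z) = P(e^z) exp(e^z), where P(w) = \sum_{j=0}^{d} (-1)^j w^j/j!, the Schwarzian derivative satisfies S(F)(z) = 2A(z) with A(z) = -(1/4) e^{2z} - (d/2) e^z - (d+1)²/4. -/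
/-- The Schwarzian derivative `S(f) = f'''/f' - (3/2)(f''/f')²`. -/
noncomputable def schwarzian (f : ℂ → ℂ) (z : ℂ) : ℂ :=
  deriv (deriv (deriv f)) z / deriv f z - (3 / 2) * (deriv (deriv f) z / deriv f z) ^ 2

lemma key_telescope (d : ℕ) (w : ℂ) :
    ∑ j ∈ Finset.range (d + 1), (-1) ^ j / (Nat.factorial j : ℂ) * (w + j) * w ^ j
      = (-1) ^ d / (Nat.factorial d : ℂ) * w ^ (d + 1) := by
  induction d with
  | zero => simp [pow_succ]
  | succ n ih =>
      rw [Finset.sum_range_succ, ih]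
      have h1 : (Nat.factorial n : ℂ) ≠ 0 := by exact_mod_cast Nat.factorial_ne_zero n
      have h2 : ((n : ℂ) + 1) ≠ 0 := Nat.cast_add_one_ne_zero n
      rw [Nat.factorial_succ]
      push_cast
      field_simp
      ring

theorem stmt_15 (d : ℕ) (P F : ℂ → ℂ)
    (hP : ∀ w : ℂ, P w = ∑ j ∈ Finset.range (d + 1), (-1) ^ j * w ^ j / (Nat.factorial j : ℂ))
    (hF : ∀ z : ℂ, F z = P (Complex.exp z) * Complex.exp (Complex.exp z)) :
    ∀ z : ℂ, schwarzian F z =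
      2 * (-(1/4) * Complex.exp (2 * z) - ((d : ℂ) / 2) * Complex.exp z - ((d : ℂ) + 1) ^ 2 / 4) := by
  intro z
  set c : ℂ := (-1) ^ d / (Nat.factorial d : ℂ) with hc
  set G : ℂ → ℂ := fun z => c * Complex.exp (Complex.exp z + ((d : ℂ) + 1) * z) with hGdef
  -- F as a sum of exponentials
  have hFeq : F = fun z => ∑ j ∈ Finset.range (d + 1),
      (-1) ^ j / (Nat.factorial j : ℂ) * Complex.exp (Complex.exp z + (j : ℂ) * z) := by
    funext x
    rw [hF, hP, Finset.sum_mul]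
    refine Finset.sum_congr rfl fun j _ => ?_
    rw [Complex.exp_add, Complex.exp_nat_mul]
    ring
  -- derivative of G
  have hG : ∀ x : ℂ, HasDerivAt G ((Complex.exp x + ((d : ℂ) + 1)) * G x) x := by
    intro x
    have hu : HasDerivAt (fun y : ℂ => Complex.exp y + ((d : ℂ) + 1) * y)
        (Complex.exp x + ((d : ℂ) + 1)) x := by
      simpa using (Complex.hasDerivAt_exp x).fun_add ((hasDerivAt_id x).const_mul ((d : ℂ) + 1))
    have h : HasDerivAt (fun y => c * Complex.exp (Complex.exp y + ((d : ℂ) + 1) * y)) (c * (Complex.exp (Complex.exp x + ((d : ℂ) + 1) * x) * (Complex.exp x + ((d : ℂ) + 1)))) x := ((Complex.hasDerivAt_exp _).comp x hu).const_mul c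
    convert h using 1
    simp [hGdef]
    ring
  -- F' = G
  have hF' : ∀ x : ℂ, HasDerivAt F (G x) x := by
    intro x
    rw [hFeq]
    have hterm : ∀ j ∈ Finset.range (d + 1),
        HasDerivAt (fun y : ℂ => (-1) ^ j / (Nat.factorial j : ℂ) * Complex.exp (Complex.exp y + (j : ℂ) * y))
          ((-1) ^ j / (Nat.factorial j : ℂ) * (Complex.exp (Complex.exp x + (j : ℂ) * x) * (Complex.exp x + (j : ℂ)))) x := by
      intro j _
      have hu : HasDerivAt (fun y : ℂ => Complex.exp y + (j : ℂ) * y)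
          (Complex.exp x + (j : ℂ)) x := by
        simpa using (Complex.hasDerivAt_exp x).fun_add ((hasDerivAt_id x).const_mul (j : ℂ))
      exact ((Complex.hasDerivAt_exp _).comp x hu).const_mul _
    have h := HasDerivAt.fun_sum hterm
    have hsum : ∑ j ∈ Finset.range (d + 1),
        (-1) ^ j / (Nat.factorial j : ℂ) * (Complex.exp (Complex.exp x + (j : ℂ) * x) * (Complex.exp x + (j : ℂ)))
        = G x := by
      have h1 : ∀ j : ℕ, Complex.exp (Complex.exp x + (j : ℂ) * x)
          = Complex.exp (Complex.exp x) * Complex.exp x ^ j := fun j => by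
        rw [Complex.exp_add, Complex.exp_nat_mul]
      have h2 : G x = Complex.exp (Complex.exp x) *
          ((-1) ^ d / (Nat.factorial d : ℂ) * Complex.exp x ^ (d + 1)) := by
        have : Complex.exp (((d : ℂ) + 1) * x) = Complex.exp x ^ (d + 1) := by
          rw [show ((d : ℂ) + 1) = ((d + 1 : ℕ) : ℂ) by push_cast; ring, Complex.exp_nat_mul]
        simp only [hGdef, hc, Complex.exp_add, this]
        ring
      simp only [h1]
      rw [h2, ← key_telescope d (Complex.exp x), Finset.mul_sum]
      exact Finset.sum_congr rfl fun j _ => by ring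
    exact hsum ▸ h
  have hDF : deriv F = G := funext fun x => (hF' x).deriv
  have hG1 : deriv G = fun x => (Complex.exp x + ((d : ℂ) + 1)) * G x :=
    funext fun x => (hG x).deriv
  have hG2 : ∀ x : ℂ, HasDerivAt (deriv G)
      (Complex.exp x * G x + (Complex.exp x + ((d : ℂ) + 1)) * ((Complex.exp x + ((d : ℂ) + 1)) * G x)) x := by
    intro x
    rw [hG1]
    exact ((Complex.hasDerivAt_exp x).add_const _).mul (hG x)
  have hGz : G z ≠ 0 := by
    refine mul_ne_zero (div_ne_zero (pow_ne_zero _ (by norm_num)) ?_) (Complex.exp_ne_zero _)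
    exact_mod_cast Nat.factorial_ne_zero d
  have e2 : Complex.exp (2 * z) = Complex.exp z * Complex.exp z := by
    rw [two_mul, Complex.exp_add]
  rw [schwarzian, hDF, show deriv (deriv G) = fun x => Complex.exp x * G x + (Complex.exp x + ((d : ℂ) + 1)) * ((Complex.exp x + ((d : ℂ) + 1)) * G x) from funext fun x => (hG2 x).deriv, hG1, e2]
  field_simp
  ring
end

section
/- Let γ > 1. There exists a sequence (n_k) of odd positive integers with n_1 = 1 such that the continuous piecewise linear function h: [0,∞) → [0,∞) with h(0) = 0 which is linear with slope n_k on each interval [2π(k-1), 2πk] satisfies h(x) = x^γ + O(x^{γ-2}) + O(1) as x → ∞. -/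
open Real

lemma tangent_le {p : ℝ} (hp : 1 ≤ p) {u v : ℝ} (hu : 0 < u) (hv : 0 ≤ v) :
    u ^ p + p * u ^ (p - 1) * (v - u) ≤ v ^ p := by
  have hs : -1 ≤ v / u - 1 := by
    have : 0 ≤ v / u := div_nonneg hv hu.le
    linarith
  have hB := one_add_mul_self_le_rpow_one_add hs hp
  have h1 : 1 + (v / u - 1) = v / u := by ring
  rw [h1, Real.div_rpow hv hu.le] at hB
  have hup : 0 < u ^ p := Real.rpow_pos_of_pos hu p
  have hmul := mul_le_mul_of_nonneg_right hB hup.le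
  have h2 : v ^ p / u ^ p * u ^ p = v ^ p := div_mul_cancel₀ _ hup.ne'
  rw [h2] at hmul
  have h3 : u ^ p = u ^ (p - 1) * u := by
    rw [← Real.rpow_add_one hu.ne']; ring_nf
  calc u ^ p + p * u ^ (p - 1) * (v - u)
      = (1 + p * (v / u - 1)) * u ^ p := by
        rw [h3]; field_simp
    _ ≤ v ^ p := hmul

noncomputable def pseq (γ : ℝ) : ℕ → ℕ × ℝ
  | 0 => (1, 0)
  | 1 => (1, 2 * π)
  | (k + 2) =>
      let H := (pseq γ (k + 1)).2
      let t := ((2 * π * ((k : ℝ) + 2)) ^ γ - H) / (2 * π)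
      let o := 2 * ⌊t / 2⌋₊ + 1
      (o, H + 2 * π * o)

lemma pseq_odd (γ : ℝ) (k : ℕ) : Odd (pseq γ k).1 ∧ 0 < (pseq γ k).1 := by
  match k with
  | 0 => exact ⟨⟨0, rfl⟩, one_pos⟩
  | 1 => exact ⟨⟨0, rfl⟩, one_pos⟩
  | (k + 2) =>
      refine ⟨⟨_, rfl⟩, Nat.succ_pos _⟩

lemma pseq_snd_succ (γ : ℝ) (k : ℕ) :
    (pseq γ (k + 1)).2 = (pseq γ k).2 + 2 * π * ((pseq γ (k + 1)).1 : ℝ) := by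
  match k with
  | 0 => simp [pseq]
  | (k + 1) => rfl

lemma two_pi_big : (1 : ℝ) ≤ 2 * π := by nlinarith [pi_gt_three]

/-- the endpoint error invariant -/
lemma pseq_err {γ : ℝ} (hγ : 1 < γ) (k : ℕ) (hk : 1 ≤ k) :
    (pseq γ k).2 - (2 * π * k) ^ γ ≤ 2 * π ∧
    |(pseq γ k).2 - (2 * π * k) ^ γ| ≤ (2 * π) ^ γ := by
  induction k, hk using Nat.le_induction with
  | base =>
      have h1 : (pseq γ 1).2 = 2 * π := by simp [pseq]
      have h2 : (2 * π : ℝ) ≤ (2 * π) ^ γ := by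
        nth_rewrite 1 [← Real.rpow_one (2 * π)]
        exact Real.rpow_le_rpow_of_exponent_le two_pi_big hγ.le
      have h3 : (2 * π * ((1:ℕ):ℝ)) ^ γ = (2 * π) ^ γ := by norm_num
      have hπ : (0:ℝ) < 2 * π := by positivity
      rw [h1, h3]
      constructor
      · linarith
      · rw [abs_sub_comm, abs_of_nonneg (by linarith)]
        linarith
  | succ k hk ih =>
      obtain ⟨j, rfl⟩ : ∃ j, k = j + 1 := ⟨k - 1, by omega⟩
      set H := (pseq γ (j + 1)).2 with hH
      set t := ((2 * π * ((j : ℝ) + 2)) ^ γ - H) / (2 * π) with ht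
      set o : ℕ := 2 * ⌊t / 2⌋₊ + 1 with ho
      have hunfold : pseq γ (j + 2) = (o, H + 2 * π * o) := rfl
      have hπ : (0:ℝ) < 2 * π := by positivity
      set a : ℝ := 2 * π * ((j:ℝ) + 1) with ha
      set b : ℝ := 2 * π * ((j:ℝ) + 2) with hb
      have hab : b - a = 2 * π := by rw [ha, hb]; ring
      have ha1 : (1:ℝ) ≤ a := by
        rw [ha]; nlinarith [pi_gt_three, (Nat.cast_nonneg j : (0:ℝ) ≤ j)]
      have ha0 : (0:ℝ) < a := by linarith
      -- increment lower bound
      have hpow1 : (1:ℝ) ≤ a ^ (γ - 1) := by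
        nth_rewrite 1 [← Real.rpow_zero a]
        exact Real.rpow_le_rpow_of_exponent_le ha1 (by linarith)
      have hinc : 2 * π ≤ b ^ γ - a ^ γ := by
        have h5 := tangent_le hγ.le ha0 (by linarith : (0:ℝ) ≤ b)
        rw [hab] at h5
        nlinarith [mul_le_mul_of_nonneg_left (by nlinarith : (1:ℝ)*1 ≤ γ * a ^ (γ-1)) hπ.le]
      -- t ≥ 0
      have hek : H - a ^ γ ≤ 2 * π := by
        have h6 := ih.1
        rw [show ((j+1:ℕ):ℝ) = (j:ℝ)+1 by push_cast; ring] at h6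
        exact h6
      have ht0 : 0 ≤ t := by
        rw [ht]
        apply div_nonneg _ hπ.le
        linarith
      have hofl : (o : ℝ) ≤ t + 1 ∧ t - 1 ≤ (o : ℝ) := by
        have h1 : ((⌊t / 2⌋₊ : ℕ) : ℝ) ≤ t / 2 := Nat.floor_le (by linarith)
        have h2 : t / 2 < (⌊t / 2⌋₊ : ℕ) + 1 := Nat.lt_floor_add_one _
        constructor <;> · rw [ho]; push_cast; linarith
      have hkey : (pseq γ (j + 1 + 1)).2 - (2 * π * ((j + 1 + 1 : ℕ):ℝ)) ^ γ = 2 * π * ((o:ℝ) - t) := by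
        rw [show (pseq γ (j+1+1)) = (o, H + 2 * π * (o:ℝ)) from hunfold,
            show ((j+1+1:ℕ):ℝ) = (j:ℝ)+2 by push_cast; ring]
        have : (2 * π * ((j:ℝ) + 2)) ^ γ = H + 2 * π * t := by
          rw [ht]; field_simp
          rw [hb]; ring
        rw [this]; ring_nf
      have habs : |(2 * π * ((o:ℝ) - t))| ≤ 2 * π := by
        rw [abs_mul, abs_of_pos hπ]
        have : |(o:ℝ) - t| ≤ 1 := abs_le.2 ⟨by linarith [hofl.2], by linarith [hofl.1]⟩
        nlinarith
      have h2g : (2 * π : ℝ) ≤ (2 * π) ^ γ := by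
        nth_rewrite 1 [← Real.rpow_one (2 * π)]
        exact Real.rpow_le_rpow_of_exponent_le two_pi_big hγ.le
      constructor
      · rw [hkey]
        nlinarith [hofl.1]
      · rw [hkey]
        exact habs.trans h2g
section main
set_option maxHeartbeats 1600000 in
lemma main_bound {γ : ℝ} (hγ : 1 < γ) (h : ℝ → ℝ) (h0 : h 0 = 0)
    (hlin : ∀ k : ℕ, 1 ≤ k → ∀ x ∈ Set.Icc (2 * π * ((k : ℝ) - 1)) (2 * π * (k : ℝ)),
      h x = h (2 * π * ((k : ℝ) - 1)) + ((pseq γ k).1 : ℝ) * (x - 2 * π * ((k : ℝ) - 1))) :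
    ∃ C > 0, ∀ x : ℝ, 0 ≤ x → |h x - x ^ γ| ≤ C * (x ^ (γ - 2) + 1) := by
  have hπ : (0:ℝ) < 2 * π := by positivity
  have hπ3 : (3:ℝ) < π := pi_gt_three
  -- endpoints match the recursion
  have hend : ∀ k : ℕ, h (2 * π * (k:ℝ)) = (pseq γ k).2 := by
    intro k
    induction k with
    | zero => simpa [pseq] using h0
    | succ k ih =>
        have hmem : (2 * π * ((k+1:ℕ):ℝ)) ∈
            Set.Icc (2 * π * (((k+1:ℕ):ℝ) - 1)) (2 * π * ((k+1:ℕ):ℝ)) := by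
          constructor
          · apply mul_le_mul_of_nonneg_left _ hπ.le
            push_cast; linarith
          · exact le_rfl
        have := hlin (k+1) (by omega) _ hmem
        rw [show (((k+1:ℕ):ℝ) - 1) = (k:ℝ) by push_cast; ring] at this
        rw [this, ih, pseq_snd_succ]
        push_cast; ring
  -- the constant
  refine ⟨(2*π)^γ + 2*π + (2*π)*(2*π)*γ*γ*(2:ℝ)^γ + 1, by positivity, ?_⟩
  intro x hx
  have hxg2 : (0:ℝ) ≤ x ^ (γ - 2) := Real.rpow_nonneg hx _
  have h2g : (2 * π : ℝ) ≤ (2 * π) ^ γ := by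
    nth_rewrite 1 [← Real.rpow_one (2 * π)]
    exact Real.rpow_le_rpow_of_exponent_le two_pi_big hγ.le
  have h2γ1 : (1:ℝ) ≤ (2:ℝ)^γ := by
    nth_rewrite 1 [← Real.rpow_zero 2]
    exact Real.rpow_le_rpow_of_exponent_le one_le_two (by linarith)
  obtain ⟨m, hxl, hxu⟩ : ∃ m : ℕ, 2 * π * (m:ℝ) ≤ x ∧ x ≤ 2 * π * ((m:ℝ)+1) := by
    refine ⟨⌊x / (2*π)⌋₊, ?_, ?_⟩
    · have := Nat.floor_le (div_nonneg hx hπ.le)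
      calc 2 * π * (⌊x / (2*π)⌋₊:ℝ) ≤ 2 * π * (x / (2*π)) :=
            mul_le_mul_of_nonneg_left this hπ.le
        _ = x := by field_simp
    · have := (Nat.lt_floor_add_one (x / (2*π))).le
      calc x = 2 * π * (x / (2*π)) := by field_simp
        _ ≤ 2 * π * ((⌊x / (2*π)⌋₊:ℝ)+1) := mul_le_mul_of_nonneg_left this hπ.le
  match m, hxl, hxu with
  | 0, hxl, hxu =>
    -- x ∈ [0, 2π], h x = x
    have hx2π : x ≤ 2 * π := by
      calc x ≤ 2 * π * (((0:ℕ):ℝ)+1) := hxu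
        _ = 2 * π := by norm_num
    have hhx : h x = x := by
      have hmem : x ∈ Set.Icc (2 * π * (((1:ℕ):ℝ) - 1)) (2 * π * ((1:ℕ):ℝ)) := by
        constructor
        · rw [show (2 * π * (((1:ℕ):ℝ) - 1)) = 0 by norm_num]; exact hx
        · rw [show (2 * π * ((1:ℕ):ℝ)) = 2 * π by norm_num]; exact hx2π
      have := hlin 1 le_rfl x hmem
      rw [show (2 * π * (((1:ℕ):ℝ) - 1)) = 0 by norm_num, h0,
        show ((pseq γ 1).1 : ℝ) = 1 by norm_num [pseq]] at this
      rw [this]; ring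
    have hxγle : x ^ γ ≤ (2 * π) ^ γ := Real.rpow_le_rpow hx hx2π (by linarith)
    have hxγ0 : (0:ℝ) ≤ x ^ γ := Real.rpow_nonneg hx γ
    have hC0 : (0:ℝ) ≤ ((2*π)^γ + 2*π + (2*π)*(2*π)*γ*γ*(2:ℝ)^γ + 1) * x^(γ-2) := by positivity
    have hD0 : (0:ℝ) ≤ (2*π)*(2*π)*γ*γ*(2:ℝ)^γ := by positivity
    rw [hhx]
    rw [abs_le]
    constructor
    · nlinarith
    · nlinarith
  | (j+1), hxl, hxu =>
    -- interval k = j+2, endpoints a,b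
    set a : ℝ := 2 * π * ((j:ℝ) + 1) with ha
    set b : ℝ := 2 * π * ((j:ℝ) + 2) with hb
    have hax : a ≤ x := by
      calc a = 2 * π * ((j+1:ℕ):ℝ) := by rw [ha]; push_cast; ring
        _ ≤ x := hxl
    have hxb : x ≤ b := by
      calc x ≤ 2 * π * (((j+1:ℕ):ℝ) + 1) := hxu
        _ = b := by rw [hb]; push_cast; ring
    have hab : b - a = 2 * π := by rw [ha, hb]; ring
    have ha2π : 2 * π ≤ a := by
      rw [ha]; nlinarith [(Nat.cast_nonneg j : (0:ℝ) ≤ j)]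
    have ha0 : (0:ℝ) < a := by linarith
    have hb0 : (0:ℝ) < b := by linarith
    have hx0 : (0:ℝ) < x := by linarith
    have ha1 : (1:ℝ) ≤ a := by linarith
    -- endpoint values and errors
    have hcast1 : ((j+1:ℕ):ℝ) = (j:ℝ) + 1 := by push_cast; ring
    have hcast2 : ((j+2:ℕ):ℝ) = (j:ℝ) + 2 := by push_cast; ring
    have hha : h a = (pseq γ (j+1)).2 := by
      rw [ha, ← hcast1]; exact hend (j+1)
    have hhb : h b = (pseq γ (j+2)).2 := by
      rw [hb, ← hcast2]; exact hend (j+2)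
    have hea := (pseq_err hγ (j+1) (by omega)).2
    have heb := (pseq_err hγ (j+2) (by omega)).2
    rw [hcast1, ← ha, ← hha] at hea
    rw [hcast2, ← hb, ← hhb] at heb
    set ea : ℝ := h a - a ^ γ with hea_def
    set eb : ℝ := h b - b ^ γ with heb_def
    -- linearity on the interval
    have hmem : x ∈ Set.Icc (2 * π * (((j+2:ℕ):ℝ) - 1)) (2 * π * ((j+2:ℕ):ℝ)) := by
      rw [hcast2, show (2 * π * ((j:ℝ) + 2 - 1)) = a by rw [ha]; ring, ← hb]
      exact ⟨hax, hxb⟩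
    have hmb : b ∈ Set.Icc (2 * π * (((j+2:ℕ):ℝ) - 1)) (2 * π * ((j+2:ℕ):ℝ)) := by
      rw [hcast2, show (2 * π * ((j:ℝ) + 2 - 1)) = a by rw [ha]; ring, ← hb]
      exact ⟨by linarith, le_rfl⟩
    have hlx := hlin (j+2) (by omega) x hmem
    have hlb := hlin (j+2) (by omega) b hmb
    rw [hcast2, show (2 * π * ((j:ℝ) + 2 - 1)) = a by rw [ha]; ring] at hlx hlb
    -- convex combination coefficients
    set lam : ℝ := (b - x) / (2 * π) with hlam
    set mu : ℝ := (x - a) / (2 * π) with hmu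
    have hlm1 : lam + mu = 1 := by
      rw [hlam, hmu]
      field_simp
      linarith
    have hlam0 : 0 ≤ lam := div_nonneg (by linarith) hπ.le
    have hmu0 : 0 ≤ mu := div_nonneg (by linarith) hπ.le
    have hmu1 : mu ≤ 1 := by linarith
    have hxa : x - a = mu * (2 * π) := by
      rw [hmu]; field_simp
    rw [hxa] at hlx
    rw [hab] at hlb
    have hdecomp : h x - x ^ γ = lam * ea + mu * eb + (lam * a^γ + mu * b^γ - x^γ) := by
      rw [hea_def, heb_def]
      linear_combination hlx - mu * hlb - (h a) * hlm1
    set G : ℝ := lam * a^γ + mu * b^γ - x^γ with hG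
    -- tangent line inequalities
    have T1 := tangent_le hγ.le hx0 ha0.le
    have T2 := tangent_le hγ.le hx0 hb0.le
    have T3 := tangent_le hγ.le ha0 hx0.le
    have T4 := tangent_le hγ.le ha0 hb0.le
    have T5 := tangent_le hγ.le hb0 ha0.le
    rw [hab] at T4
    rw [show a - b = -(2*π) by linarith] at T5
    rw [hxa] at T3
    have hlmx : lam * a + mu * b = x := by
      rw [hlam, hmu]
      field_simp
      linear_combination x * hab
    have hz : lam * (a - x) + mu * (b - x) = 0 := by linear_combination hlmx - x * hlm1
    -- G ≥ 0
    have hGlb : 0 ≤ G := by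
      have e1 := mul_le_mul_of_nonneg_left T1 hlam0
      have e2 := mul_le_mul_of_nonneg_left T2 hmu0
      have key : lam * (γ * x^(γ-1) * (a-x)) + mu * (γ * x^(γ-1) * (b-x)) = 0 := by
        linear_combination (γ * x^(γ-1)) * hz
      have hxx : lam * x^γ + mu * x^γ = x^γ := by linear_combination x^γ * hlm1
      rw [hG]
      linarith [e1, e2, key, hxx]
    -- G ≤ γ * 2π * (b^(γ-1) - a^(γ-1))
    have hbr0 : 0 ≤ (b^γ - a^γ) - γ * a^(γ-1) * (2*π) := by linarith
    have hbr2 : (b^γ - a^γ) ≤ γ * b^(γ-1) * (2*π) := by linarith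
    have hGub : G ≤ γ * (2*π) * (b^(γ-1) - a^(γ-1)) := by
      have s1 : G ≤ mu * ((b^γ - a^γ) - γ * a^(γ-1) * (2*π)) := by
        have haa : lam * a^γ + mu * a^γ = a^γ := by linear_combination a^γ * hlm1
        rw [hG]
        linarith [T3, haa]
      have s2 : mu * ((b^γ - a^γ) - γ * a^(γ-1) * (2*π)) ≤
          (b^γ - a^γ) - γ * a^(γ-1) * (2*π) := by
        linarith [mul_le_mul_of_nonneg_right hmu1 hbr0]
      linarith [s1, s2, hbr2]
    -- bound b^(γ-1) - a^(γ-1) by x^(γ-2)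
    have hBD : b^(γ-1) - a^(γ-1) ≤ γ * (2:ℝ)^γ * (2*π) * x^(γ-2) := by
      rcases le_or_gt 2 γ with hγ2 | hγ2
      · -- γ ≥ 2
        have T6 := tangent_le (p := γ-1) (by linarith) hb0 ha0.le
        rw [show γ - 1 - 1 = γ - 2 by ring, show a - b = -(2*π) by linarith] at T6
        have hb2x : b ≤ 2 * x := by linarith
        have hbx : b^(γ-2) ≤ (2:ℝ)^γ * x^(γ-2) := by
          calc b^(γ-2) ≤ (2*x)^(γ-2) := Real.rpow_le_rpow hb0.le hb2x (by linarith)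
            _ = (2:ℝ)^(γ-2) * x^(γ-2) := Real.mul_rpow (by norm_num) hx
            _ ≤ (2:ℝ)^γ * x^(γ-2) := by
                apply mul_le_mul_of_nonneg_right _ hxg2
                exact Real.rpow_le_rpow_of_exponent_le one_le_two (by linarith)
        have hmono := mul_le_mul_of_nonneg_left hbx
          (mul_nonneg (by linarith : (0:ℝ) ≤ γ-1) hπ.le)
        have hrest : (0:ℝ) ≤ 2*π*((2:ℝ)^γ * x^(γ-2)) := by positivity
        linarith [T6, hmono, hrest]
      · -- 1 < γ < 2
        have hp1 : (a/b)^(1:ℝ) ≤ (a/b)^(γ-1) :=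
          Real.rpow_le_rpow_of_exponent_ge (by positivity) (by
            rw [div_le_one hb0]; linarith) (by linarith)
        rw [Real.rpow_one] at hp1
        have hsplit : (a/b)^(γ-1) * b^(γ-1) = a^(γ-1) := by
          rw [← Real.mul_rpow (by positivity) hb0.le, div_mul_cancel₀ _ hb0.ne']
        have hbg1 : (0:ℝ) < b^(γ-1) := Real.rpow_pos_of_pos hb0 _
        have hs2 : (a/b) * b^(γ-1) ≤ a^(γ-1) := by
          rw [← hsplit]
          exact mul_le_mul_of_nonneg_right hp1 hbg1.le
        have hbb : b^(γ-2) * b = b^(γ-1) := by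
          rw [show γ - 1 = γ - 2 + 1 by ring, Real.rpow_add_one hb0.ne']
        have hs3 : b^(γ-1) - a^(γ-1) ≤ b^(γ-2) * (2*π) := by
          have hq : (a/b) * b^(γ-1) = a * b^(γ-2) := by
            rw [← hbb]
            field_simp
          rw [hq] at hs2
          have h10 : b^(γ-2)*(b-a) = b^(γ-2)*(2*π) := by rw [hab]
          linarith [hs2, hbb, h10]
        have hbx : b^(γ-2) ≤ x^(γ-2) := by
          have := Real.antitoneOn_rpow_Ioi_of_exponent_nonpos (by linarith : γ - 2 ≤ 0)
            (Set.mem_Ioi.2 hx0) (Set.mem_Ioi.2 hb0) hxb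
          exact this
        have hfac : (1:ℝ) ≤ γ * (2:ℝ)^γ := by
          have := mul_le_mul_of_nonneg_left h2γ1 (by linarith : (0:ℝ) ≤ γ)
          linarith
        have hm1 := mul_le_mul_of_nonneg_right hbx hπ.le
        have hm2 : (0:ℝ) ≤ (γ*(2:ℝ)^γ - 1)*((2*π)*x^(γ-2)) :=
          mul_nonneg (by linarith) (by positivity)
        linarith [hs3, hm1, hm2]
    -- assemble
    have hGD : G ≤ (2*π)*(2*π)*γ*γ*(2:ℝ)^γ * x^(γ-2) := by
      have := mul_le_mul_of_nonneg_left hBD (by positivity : (0:ℝ) ≤ γ * (2*π))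
      linarith [hGub, this]
    have heaB := abs_le.1 hea
    have hebB := abs_le.1 heb
    have u1 : lam * ea ≤ lam * (2*π)^γ := mul_le_mul_of_nonneg_left heaB.2 hlam0
    have u2 : mu * eb ≤ mu * (2*π)^γ := mul_le_mul_of_nonneg_left hebB.2 hmu0
    have l1 : lam * (-(2*π)^γ) ≤ lam * ea := mul_le_mul_of_nonneg_left heaB.1 hlam0
    have l2 : mu * (-(2*π)^γ) ≤ mu * eb := mul_le_mul_of_nonneg_left hebB.1 hmu0
    have hsum : lam * (2*π)^γ + mu * (2*π)^γ = (2*π)^γ := by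
      linear_combination ((2*π)^γ) * hlm1
    have hDx0 : (0:ℝ) ≤ (2*π)*(2*π)*γ*γ*(2:ℝ)^γ * x^(γ-2) := by positivity
    have hfin : |h x - x ^ γ| ≤ (2*π)^γ + (2*π)*(2*π)*γ*γ*(2:ℝ)^γ * x^(γ-2) := by
      rw [hdecomp, abs_le]
      constructor
      · linarith
      · linarith
    have hC2 : (0:ℝ) ≤ ((2*π)^γ + 2*π + 1) * x^(γ-2) := by positivity
    calc |h x - x ^ γ| ≤ (2*π)^γ + (2*π)*(2*π)*γ*γ*(2:ℝ)^γ * x^(γ-2) := hfin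
      _ ≤ ((2*π)^γ + 2*π + (2*π)*(2*π)*γ*γ*(2:ℝ)^γ + 1) * (x^(γ-2)+1) := by
          have hD0' : (0:ℝ) ≤ (2*π)*(2*π)*γ*γ*(2:ℝ)^γ := by positivity
          have hexp : ((2*π)^γ + 2*π + (2*π)*(2*π)*γ*γ*(2:ℝ)^γ + 1) * (x^(γ-2)+1)
              = ((2*π)^γ + 2*π + 1) * x^(γ-2) + (2*π)*(2*π)*γ*γ*(2:ℝ)^γ * x^(γ-2)
                + ((2*π)^γ + 2*π + (2*π)*(2*π)*γ*γ*(2:ℝ)^γ + 1) := by ring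
          rw [hexp]
          linarith [hC2, hD0', hπ]

end main

theorem stmt_16 (γ : ℝ) (hγ : 1 < γ) :
    ∃ n : ℕ → ℕ, n 1 = 1 ∧ (∀ k : ℕ, 1 ≤ k → Odd (n k) ∧ 0 < n k) ∧
      ∀ h : ℝ → ℝ, h 0 = 0 →
        (∀ k : ℕ, 1 ≤ k → ∀ x ∈ Set.Icc (2 * π * ((k : ℝ) - 1)) (2 * π * (k : ℝ)),
          h x = h (2 * π * ((k : ℝ) - 1)) + (n k : ℝ) * (x - 2 * π * ((k : ℝ) - 1))) →
        ∃ C > 0, ∀ x : ℝ, 0 ≤ x → |h x - x ^ γ| ≤ C * (x ^ (γ - 2) + 1) := by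
  refine ⟨fun k => (pseq γ k).1, by norm_num [pseq], fun k _ => pseq_odd γ k, ?_⟩
  intro h h0 hlin
  exact main_bound hγ h h0 hlin
end
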